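/- Let S ⊆ ℝ be an open interval, let A, B, Q : S → Matrix N N ℂ, let Γ and M be constant N×N complex matrices, and let Φ : S → Matrix N N ℂ be twice differentiable with ½ A(x) Φ''(x) + B(x) Φ'(x) + Q(x) Φ(x) = Φ(x) Γ for all x ∈ S. Define U(t,x) := Φ(x) · exp(tΓ) · M. Then U satisfies the backward differential equation ∂U/∂t(t,x) = ½ A(x) ∂²U/∂x²(t,x) + B(x) ∂U/∂x(t,x) + Q(x) U(t,x) for all t ∈ ℝ and x ∈ S, with initial condition U(0,x) = Φ(x) M. -/

import Mathlib

open MeasureTheory Filter Topology Matrix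

section helpers

attribute [local instance] Matrix.linftyOpNormedRing Matrix.linftyOpNormedAlgebra

variable {N : ℕ}

lemma exp_comm_aux (Γ : Matrix (Fin N) (Fin N) ℂ) (t : ℝ) :
    NormedSpace.exp ((t : ℂ) • Γ) * Γ = Γ * NormedSpace.exp ((t : ℂ) • Γ) :=
  ((Commute.refl Γ).smul_left (t : ℂ)).exp_left

lemma exp_entry_hasDerivAt (Γ : Matrix (Fin N) (Fin N) ℂ) (t : ℝ) (p q : Fin N) :
    HasDerivAt (fun s : ℝ => NormedSpace.exp ((s : ℂ) • Γ) p q)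
      ((NormedSpace.exp ((t : ℂ) • Γ) * Γ) p q) t := by
  have h1 : HasDerivAt (fun u : ℂ => NormedSpace.exp (u • Γ))
      (NormedSpace.exp ((t : ℂ) • Γ) * Γ) (t : ℂ) :=
    hasDerivAt_exp_smul_const (𝕂 := ℂ) Γ (t : ℂ)
  have h2 : HasDerivAt (fun s : ℝ => (s : ℂ)) 1 t := by
    simpa using! Complex.ofRealCLM.hasDerivAt (x := t)
  have hmat : HasDerivAt (fun s : ℝ => NormedSpace.exp ((s : ℂ) • Γ))
      (NormedSpace.exp ((t : ℂ) • Γ) * Γ) t := by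
    simpa using! h1.scomp t h2
  haveI : FiniteDimensional ℝ (Matrix (Fin N) (Fin N) ℂ) :=
    Module.Finite.trans ℂ (Matrix (Fin N) (Fin N) ℂ)
  let Lp : Matrix (Fin N) (Fin N) ℂ →ₗ[ℝ] ℂ :=
    { toFun := fun X => X p q
      map_add' := fun _ _ => rfl
      map_smul' := fun _ _ => rfl }
  exact Lp.toContinuousLinearMap.hasFDerivAt.comp_hasDerivAt t hmat

end helpers

/-- If `Φ` is a matrix-valued eigenfunction of `𝒜 = ½A d²/dx² + B d/dx + Q` with
eigenvalue `Γ`, then `U(t,x) = Φ(x) e^{tΓ} M` solves the backward equation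
`∂U/∂t = 𝒜U` with `U(0,x) = Φ(x) M`. -/
theorem stmt_7 (N : ℕ) (a b : ℝ) (S : Set ℝ) (hS : S = Set.Ioo a b)
    (A B Q : ℝ → Matrix (Fin N) (Fin N) ℂ)
    (Γ M : Matrix (Fin N) (Fin N) ℂ)
    (Φ Φ' Φ'' : ℝ → Matrix (Fin N) (Fin N) ℂ)
    (hΦ : ∀ x ∈ S, ∀ i j, HasDerivAt (fun z => Φ z i j) (Φ' x i j) x)
    (hΦ' : ∀ x ∈ S, ∀ i j, HasDerivAt (fun z => Φ' z i j) (Φ'' x i j) x)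
    (heig : ∀ x ∈ S,
      (1/2 : ℂ) • (A x * Φ'' x) + B x * Φ' x + Q x * Φ x = Φ x * Γ)
    (U : ℝ → ℝ → Matrix (Fin N) (Fin N) ℂ)
    (hU : ∀ t x, U t x = Φ x * NormedSpace.exp ((t : ℂ) • Γ) * M) :
    (∀ t : ℝ, ∀ x ∈ S, ∀ i j,
      HasDerivAt (fun s : ℝ => U s x i j)
        (((1/2 : ℂ) • (A x * Matrix.of fun p q => deriv (deriv fun z => U t z p q) x)
          + B x * (Matrix.of fun p q => deriv (fun z => U t z p q) x)
          + Q x * U t x) i j) t)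
    ∧ ∀ x : ℝ, U 0 x = Φ x * M := by
  constructor
  · intro t x hx i j
    set E : Matrix (Fin N) (Fin N) ℂ := NormedSpace.exp ((t : ℂ) • Γ) with hE
    -- entrywise x-derivatives
    have key : ∀ z ∈ S, ∀ p q, HasDerivAt (fun w => U t w p q) ((Φ' z * (E * M)) p q) z := by
      intro z hz p q
      have hfun : ∀ w, U t w p q = ∑ k, Φ w p k * (E * M) k q := by
        intro w; rw [hU, mul_assoc, Matrix.mul_apply]
      have h := HasDerivAt.fun_sum (fun k (_ : k ∈ Finset.univ) =>
        (hΦ z hz p k).mul_const ((E * M) k q))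
      rw [Matrix.mul_apply]
      exact h.congr_of_eventuallyEq (Eventually.of_forall hfun)
    have key' : ∀ z ∈ S, ∀ p q,
        HasDerivAt (fun w => (Φ' w * (E * M)) p q) ((Φ'' z * (E * M)) p q) z := by
      intro z hz p q
      have h := HasDerivAt.fun_sum (fun k (_ : k ∈ Finset.univ) =>
        (hΦ' z hz p k).mul_const ((E * M) k q))
      rw [Matrix.mul_apply]
      exact h.congr_of_eventuallyEq (Eventually.of_forall fun w => (Matrix.mul_apply ..))
    have hSopen : IsOpen S := hS ▸ isOpen_Ioo
    have hnhds : S ∈ 𝓝 x := hSopen.mem_nhds hx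
    have hof1 : (Matrix.of fun p q => deriv (fun z => U t z p q) x) = Φ' x * (E * M) := by
      ext p q; exact (key x hx p q).deriv
    have hof2 : (Matrix.of fun p q => deriv (deriv fun z => U t z p q) x)
        = Φ'' x * (E * M) := by
      ext p q
      have hev : (deriv fun z => U t z p q) =ᶠ[𝓝 x] fun w => (Φ' w * (E * M)) p q := by
        filter_upwards [hnhds] with z hz
        exact (key z hz p q).deriv
      rw [show (Matrix.of fun p q => deriv (deriv fun z => U t z p q) x) p q
        = deriv (deriv fun z => U t z p q) x from rfl, hev.deriv_eq]
      exact (key' x hx p q).deriv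
    -- the time derivative
    have hmain : HasDerivAt (fun s : ℝ => U s x i j) ((Φ x * (E * Γ) * M) i j) t := by
      have hfun : ∀ s : ℝ, U s x i j
          = ∑ l, (∑ k, Φ x i k * NormedSpace.exp ((s : ℂ) • Γ) k l) * M l j := by
        intro s; rw [hU]; simp [Matrix.mul_apply]
      have h := HasDerivAt.fun_sum (fun l (_ : l ∈ Finset.univ) =>
        (HasDerivAt.fun_sum (fun k (_ : k ∈ Finset.univ) =>
          (exp_entry_hasDerivAt Γ t k l).const_mul (Φ x i k))).mul_const (M l j))
      rw [show (Φ x * (E * Γ) * M) i j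
          = ∑ l, (∑ k, Φ x i k * (E * Γ) k l) * M l j from by simp [Matrix.mul_apply]]
      exact h.congr_of_eventuallyEq (Eventually.of_forall hfun)
    have hval : ((1/2 : ℂ) • (A x * Matrix.of fun p q => deriv (deriv fun z => U t z p q) x)
          + B x * (Matrix.of fun p q => deriv (fun z => U t z p q) x)
          + Q x * U t x) = Φ x * (E * Γ) * M := by
      rw [hof1, hof2, hU]
      have hfact : (1/2 : ℂ) • (A x * (Φ'' x * (E * M))) + B x * (Φ' x * (E * M))
          + Q x * (Φ x * E * M)
          = ((1/2 : ℂ) • (A x * Φ'' x) + B x * Φ' x + Q x * Φ x) * (E * M) := by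
        simp only [add_mul, Matrix.smul_mul, mul_assoc]
      rw [hfact, heig x hx, ← mul_assoc, mul_assoc (Φ x) Γ E, ← exp_comm_aux, ← hE,
        mul_assoc (Φ x) (E * Γ) M]
    rw [hval]
    exact hmain
  · intro x
    rw [hU]
    norm_num [NormedSpace.exp_zero]
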